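/- For ρ ∈ (0,1), ρ ≠ 1/2, with φ = log(ρ/(1-ρ)), the function E ↦ S_{ρ,ρ}(-E) := -s((E + log(1+e^φ))/φ) is concave on the interval [-log(1+e^{-|φ|}), -log(1+e^{|φ|})], vanishes at both endpoints, is positive in the interior, and attains its maximum log 2 at E₀ = φ/2 - log(1+e^φ). -/

import Mathlib

noncomputable def entS (θ : ℝ) : ℝ := θ * Real.log θ + (1 - θ) * Real.log (1 - θ)

lemma neg_entS_eq_binEntropy (x : ℝ) : - entS x = Real.binEntropy x := by
  simp [Real.binEntropy, entS, Real.log_inv]; ring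

lemma aux_main (g : ℝ → ℝ) (c d lo hi : ℝ) (hlh : lo < hi)
    (hg : ∀ E, g E = Real.binEntropy (E * c + d))
    (h1 : lo * c + d = 0) (h2 : hi * c + d = 1) :
    ConcaveOn ℝ (Set.Icc lo hi) g ∧ g lo = 0 ∧ g hi = 0 ∧
    (∀ E ∈ Set.Ioo lo hi, 0 < g E) ∧ (∀ E, g E ≤ Real.log 2) := by
  have hc1 : c * (hi - lo) = 1 := by nlinarith
  have hc : 0 < c := by nlinarith
  have hmem : ∀ x ∈ Set.Icc lo hi, x * c + d ∈ Set.Icc (0:ℝ) 1 := by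
    rintro x ⟨hx1, hx2⟩
    constructor <;> nlinarith
  have hconc := Real.strictConcave_binEntropy.concaveOn
  refine ⟨⟨convex_Icc _ _, ?_⟩, ?_, ?_, ?_, ?_⟩
  · intro x hx y hy a b ha hb hab
    have := hconc.2 (hmem x hx) (hmem y hy) ha hb hab
    simp only [smul_eq_mul] at this ⊢
    rw [hg x, hg y, hg]
    have key : (a * x + b * y) * c + d = a * (x * c + d) + b * (y * c + d) := by
      have hb' : b = 1 - a := by linarith
      rw [hb']; ring
    rw [key]; exact this
  · rw [hg, h1, Real.binEntropy_zero]
  · rw [hg, h2, Real.binEntropy_one]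
  · rintro E ⟨hE1, hE2⟩
    rw [hg]
    exact Real.binEntropy_pos (by nlinarith) (by nlinarith)
  · intro E; rw [hg]; exact Real.binEntropy_le_log_two

theorem stmt_5 (ρ : ℝ) (hρ : ρ ∈ Set.Ioo (0:ℝ) 1) (hρ' : ρ ≠ 1/2)
    (φ : ℝ) (hφ : φ = Real.log (ρ / (1 - ρ)))
    (f : ℝ → ℝ) (hf : f = fun E => - entS ((E + Real.log (1 + Real.exp φ)) / φ))
    (lo hi E₀ : ℝ)
    (hlo : lo = - Real.log (1 + Real.exp |φ|))
    (hhi : hi = - Real.log (1 + Real.exp (-|φ|)))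
    (hE₀ : E₀ = φ / 2 - Real.log (1 + Real.exp φ)) :
    ConcaveOn ℝ (Set.Icc lo hi) f ∧
    f lo = 0 ∧ f hi = 0 ∧
    (∀ E ∈ Set.Ioo lo hi, 0 < f E) ∧
    f E₀ = Real.log 2 ∧
    (∀ E ∈ Set.Icc lo hi, f E ≤ Real.log 2) := by
  obtain ⟨hρ0, hρ1⟩ := hρ
  set L := Real.log (1 + Real.exp φ) with hL
  have hφ0 : φ ≠ 0 := by
    intro h
    rw [hφ] at h
    rcases Real.log_eq_zero.mp h with h' | h' | h'
    · have : 1 - ρ > 0 := by linarith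
      rw [div_eq_zero_iff] at h'
      rcases h' with h' | h' <;> linarith
    · rw [div_eq_one_iff_eq (by linarith)] at h'
      apply hρ'; linarith
    · have h1 : 0 < ρ / (1 - ρ) := div_pos hρ0 (by linarith)
      linarith
  have hfb : ∀ E, f E = Real.binEntropy ((E + L) / φ) := by
    intro E; rw [hf]; exact neg_entS_eq_binEntropy _
  have logid : L = φ + Real.log (1 + Real.exp (-φ)) := by
    rw [hL]
    have h1 : (1 : ℝ) + Real.exp φ = Real.exp φ * (1 + Real.exp (-φ)) := by
      rw [mul_add, mul_one, ← Real.exp_add]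
      simp [add_comm]
    rw [h1, Real.log_mul (Real.exp_ne_zero _) (by positivity), Real.log_exp]
  have hE0 : f E₀ = Real.log 2 := by
    rw [hfb, hE₀]
    have : (φ / 2 - L + L) / φ = 2⁻¹ := by field_simp; ring
    rw [this, Real.binEntropy_two_inv]
  have hmain : ConcaveOn ℝ (Set.Icc lo hi) f ∧ f lo = 0 ∧ f hi = 0 ∧
      (∀ E ∈ Set.Ioo lo hi, 0 < f E) ∧ (∀ E, f E ≤ Real.log 2) := by
    rcases hφ0.lt_or_gt with hneg | hpos
    · have habs : |φ| = -φ := abs_of_neg hneg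
      have hlo' : lo = φ - L := by
        rw [hlo, habs]
        have : Real.log (1 + Real.exp (-φ)) = L - φ := by rw [logid]; ring
        rw [this]; ring
      have hhi' : hi = -L := by rw [hhi, habs, neg_neg, ← hL]
      apply aux_main f (-1/φ) (1 - L/φ) lo hi (by rw [hlo', hhi']; linarith)
      · intro E
        rw [hfb, ← Real.binEntropy_one_sub]
        congr 1
        field_simp; ring
      · rw [hlo']; field_simp; ring
      · rw [hhi']; field_simp; ring
    · have habs : |φ| = φ := abs_of_pos hpos
      have hlo' : lo = -L := by rw [hlo, habs, ← hL]
      have hhi' : hi = φ - L := by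
        rw [hhi, habs]
        have : Real.log (1 + Real.exp (-φ)) = L - φ := by rw [logid]; ring
        rw [this]; ring
      apply aux_main f (1/φ) (L/φ) lo hi (by rw [hlo', hhi']; linarith)
      · intro E; rw [hfb]; congr 1; field_simp
      · rw [hlo']; field_simp; ring
      · rw [hhi']; field_simp; ring
  exact ⟨hmain.1, hmain.2.1, hmain.2.2.1, hmain.2.2.2.1, hE0,
    fun E _ => hmain.2.2.2.2 E⟩
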